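/- Let G be a bounded Vilenkin group, n ∈ ℕ, and x ∈ I_s \ I_{s+1} for some 0 ≤ s ≤ N − 1. Then ∫_{I_N} |D_n(x − t)| dμ(t) ≤ c M_s / M_N, where c depends only on sup_k m_k. -/

import Mathlib

open MeasureTheory Complex Real

def Mseq (m : ℕ → ℕ) : ℕ → ℕ
  | 0 => 1
  | k + 1 => m k * Mseq m k

def digit (m : ℕ → ℕ) (n j : ℕ) : ℕ := n / Mseq m j % m j

noncomputable def hi (m : ℕ → ℕ) (n : ℕ) : ℕ := sSup {j | digit m n j ≠ 0}

noncomputable def lo (m : ℕ → ℕ) (n : ℕ) : ℕ := sInf {j | digit m n j ≠ 0}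

noncomputable def rho (m : ℕ → ℕ) (n : ℕ) : ℕ := hi m n - lo m n

abbrev Gm (m : ℕ → ℕ) := ∀ k, ZMod (m k)

instance (n : ℕ) : MeasurableSpace (ZMod n) := ⊤

noncomputable def rad (m : ℕ → ℕ) (j : ℕ) (x : Gm m) : ℂ :=
  Complex.exp (2 * Real.pi * Complex.I * ((x j).val : ℂ) / (m j : ℂ))

noncomputable def vil (m : ℕ → ℕ) (n : ℕ) (x : Gm m) : ℂ :=
  ∏ᶠ j, rad m j x ^ digit m n j

noncomputable def Dker (m : ℕ → ℕ) (n : ℕ) (x : Gm m) : ℂ :=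
  ∑ k ∈ Finset.range n, vil m k x

section helpers
variable {m : ℕ → ℕ} (hm : ∀ k, 2 ≤ m k)
include hm

lemma Mseq_pos (k : ℕ) : 0 < Mseq m k := by
  induction k with
  | zero => simp [Mseq]
  | succ k ih => have := hm k; simp only [Mseq]; positivity

omit hm in
lemma Mseq_dvd {j k : ℕ} (h : j ≤ k) : Mseq m j ∣ Mseq m k := by
  induction k with
  | zero => simp [Nat.le_zero.mp h]
  | succ k ih =>
    rcases Nat.lt_or_ge j (k+1) with h' | h'
    · exact dvd_mul_of_dvd_right (ih (by omega)) _
    · have : j = k + 1 := by omega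
      simp [this]

lemma Mseq_le {j k : ℕ} (h : j ≤ k) : Mseq m j ≤ Mseq m k :=
  Nat.le_of_dvd (Mseq_pos hm k) (Mseq_dvd h)

lemma two_pow_le_Mseq (k : ℕ) : 2 ^ k ≤ Mseq m k := by
  induction k with
  | zero => simp [Mseq]
  | succ k ih =>
    have := hm k
    calc 2 ^ (k+1) = 2 * 2 ^ k := by ring
    _ ≤ m k * Mseq m k := Nat.mul_le_mul this ih
    _ = Mseq m (k+1) := rfl

lemma lt_Mseq_self (n : ℕ) : n < Mseq m n :=
  lt_of_lt_of_le Nat.lt_two_pow_self (two_pow_le_Mseq hm n)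

omit hm in
lemma digit_eq_zero_of_lt {n j : ℕ} (h : n < Mseq m j) : digit m n j = 0 := by
  simp [digit, Nat.div_eq_of_lt h]

lemma digit_eq_zero_of_le {n j : ℕ} (h : n ≤ j) : digit m n j = 0 :=
  digit_eq_zero_of_lt (lt_of_lt_of_le (lt_Mseq_self hm n) (Mseq_le hm h))

lemma digit_support (n : ℕ) :
    (Function.mulSupport fun j => rad m j x ^ digit m n j) ⊆ Set.Iio n := by
  intro j hj
  simp only [Function.mem_mulSupport] at hj
  by_contra h
  rw [digit_eq_zero_of_le hm (by simpa using h)] at hj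
  simp at hj

lemma vil_eq_prod (n : ℕ) (x : Gm m) :
    vil m n x = ∏ j ∈ Finset.range n, rad m j x ^ digit m n j := by
  apply finprod_eq_prod_of_mulSupport_subset
  intro j hj
  simpa using digit_support hm n hj

lemma rad_abs (j : ℕ) (x : Gm m) : ‖rad m j x‖ = 1 := by
  have hmj : (0:ℝ) < m j := by have := hm j; positivity
  have : (2 * Real.pi * Complex.I * (((x j).val : ℕ) : ℂ) / ((m j : ℕ) : ℂ))
      = ((2 * Real.pi * ((x j).val : ℝ) / (m j : ℝ) : ℝ) : ℂ) * Complex.I := by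
    push_cast
    field_simp
  rw [rad, this, Complex.norm_exp_ofReal_mul_I]

lemma vil_abs (n : ℕ) (x : Gm m) : ‖vil m n x‖ = 1 := by
  rw [vil_eq_prod hm, norm_prod]
  apply Finset.prod_eq_one
  intro j _
  rw [norm_pow, rad_abs hm, one_pow]

lemma rad_pow_card (j : ℕ) (x : Gm m) : rad m j x ^ (m j) = 1 := by
  have hmj : ((m j : ℕ) : ℂ) ≠ 0 := by
    have := hm j; exact_mod_cast (by omega : (m j) ≠ 0)
  rw [rad, ← Complex.exp_nat_mul]
  have : (m j : ℂ) * (2 * Real.pi * Complex.I * (((x j).val : ℕ) : ℂ) / ((m j : ℕ) : ℂ))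
      = (((x j).val : ℕ) : ℤ) * (2 * Real.pi * Complex.I) := by
    push_cast
    field_simp
  rw [this, Complex.exp_int_mul_two_pi_mul_I]

lemma rad_ne_one {s : ℕ} {x : Gm m} (hx : x s ≠ 0) : rad m s x ≠ 1 := by
  haveI : NeZero (m s) := ⟨by have := hm s; omega⟩
  have hv0 : (x s).val ≠ 0 := fun h => hx ((ZMod.val_eq_zero _).mp h)
  have hvlt : (x s).val < m s := ZMod.val_lt _
  intro h
  rw [rad, Complex.exp_eq_one_iff] at h
  obtain ⟨k, hk⟩ := h
  have hms : ((m s : ℕ) : ℂ) ≠ 0 := by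
    have := hm s; exact_mod_cast (by omega : (m s) ≠ 0)
  have h2πI : (2 * (Real.pi : ℂ) * Complex.I) ≠ 0 := by
    have hπ : ((Real.pi : ℝ) : ℂ) ≠ 0 := by exact_mod_cast Real.pi_ne_zero
    simp [Complex.I_ne_zero, hπ]
  have hdiv : (((x s).val : ℂ)) / ((m s : ℕ) : ℂ) = (k : ℂ) := by
    apply mul_left_cancel₀ h2πI
    calc 2 * (Real.pi : ℂ) * Complex.I * ((((x s).val : ℂ)) / ((m s : ℕ) : ℂ))
        = 2 * Real.pi * Complex.I * (((x s).val : ℂ)) / ((m s : ℕ) : ℂ) := by ring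
      _ = (k : ℂ) * (2 * Real.pi * Complex.I) := hk
      _ = 2 * (Real.pi : ℂ) * Complex.I * (k : ℂ) := by ring
  have hre : (((x s).val : ℂ)) = (k : ℂ) * ((m s : ℕ) : ℂ) := by
    exact (div_eq_iff hms).mp hdiv
  have hreal : ((((x s).val : ℕ)) : ℝ) = (k : ℝ) * ((m s : ℕ) : ℝ) := by exact_mod_cast hre
  have hm' : (0:ℝ) < ((m s : ℕ) : ℝ) := by have := hm s; positivity
  have h1 : (0:ℝ) < ((((x s).val : ℕ)) : ℝ) := by
    have := Nat.pos_of_ne_zero hv0; exact_mod_cast this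
  have h2 : ((((x s).val : ℕ)) : ℝ) < ((m s : ℕ) : ℝ) := by exact_mod_cast hvlt
  have hkpos : 0 < k := by
    by_contra hneg
    push_neg at hneg
    have : (k:ℝ) ≤ 0 := by exact_mod_cast hneg
    nlinarith
  have hk1 : (1:ℝ) ≤ (k:ℝ) := by exact_mod_cast hkpos
  nlinarith

lemma digit_add_low {L j a b : ℕ} (hj : j < L) :
    digit m (a * Mseq m L + b) j = digit m b j := by
  obtain ⟨k, hk⟩ := Mseq_dvd (m := m) (show j + 1 ≤ L by omega)
  have hMj : 0 < Mseq m j := Mseq_pos hm j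
  have hrw : a * Mseq m L + b = b + a * k * m j * Mseq m j := by
    rw [hk]
    show a * (Mseq m (j+1) * k) + b = _
    simp only [Mseq]; ring
  unfold digit
  rw [hrw, Nat.add_mul_div_right _ _ hMj, Nat.add_mul_mod_self_right]

lemma digit_mul_zero {L j a : ℕ} (hj : j < L) : digit m (a * Mseq m L) j = 0 := by
  have h := digit_add_low hm (a := a) (b := 0) hj
  rw [add_zero] at h
  rw [h]
  simp [digit]

lemma digit_high_zero {L j b : ℕ} (hj : L ≤ j) (hb : b < Mseq m L) : digit m b j = 0 :=
  digit_eq_zero_of_lt (lt_of_lt_of_le hb (Mseq_le hm hj))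

lemma digit_add_high {L j a b : ℕ} (hj : L ≤ j) (hb : b < Mseq m L) :
    digit m (a * Mseq m L + b) j = digit m (a * Mseq m L) j := by
  obtain ⟨k, hk⟩ := Mseq_dvd (m := m) hj
  have hL : 0 < Mseq m L := Mseq_pos hm L
  have hMj : 0 < Mseq m j := Mseq_pos hm j
  have hkpos : 0 < k := by
    rcases Nat.eq_zero_or_pos k with h | h
    · rw [h, mul_zero] at hk; omega
    · exact h
  have hmod : a * Mseq m L % Mseq m j = Mseq m L * (a % k) := by
    rw [hk, mul_comm a, Nat.mul_mod_mul_left]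
  have hlt : a * Mseq m L % Mseq m j + b < Mseq m j := by
    have h1 : a % k < k := Nat.mod_lt _ hkpos
    rw [hmod, hk]
    calc Mseq m L * (a % k) + b < Mseq m L * (a % k) + Mseq m L := by omega
      _ = Mseq m L * (a % k + 1) := by ring
      _ ≤ Mseq m L * k := Nat.mul_le_mul_left _ (by omega)
  have hqr := Nat.div_add_mod (a * Mseq m L) (Mseq m j)
  have hrw : a * Mseq m L + b
      = Mseq m j * (a * Mseq m L / Mseq m j) + (a * Mseq m L % Mseq m j + b) := by omega
  unfold digit
  rw [hrw, Nat.mul_add_div hMj, Nat.div_eq_of_lt hlt, add_zero]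

lemma vil_mul {L a b : ℕ} (hb : b < Mseq m L) (x : Gm m) :
    vil m (a * Mseq m L + b) x = vil m (a * Mseq m L) x * vil m b x := by
  have hfin : ∀ n : ℕ, (Function.mulSupport fun j => rad m j x ^ digit m n j).Finite :=
    fun n => Set.Finite.subset (Set.finite_Iio n) (digit_support hm n)
  unfold vil
  rw [← finprod_mul_distrib (hfin _) (hfin _)]
  apply finprod_congr
  intro j
  rcases Nat.lt_or_ge j L with hj | hj
  · rw [digit_add_low hm hj, digit_mul_zero hm hj, pow_zero, one_mul]
  · rw [digit_add_high hm hj hb, digit_high_zero hm hj hb, pow_zero, mul_one]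

lemma vil_single {s d : ℕ} (hd : d < m s) (x : Gm m) :
    vil m (d * Mseq m s) x = rad m s x ^ d := by
  have hMs : 0 < Mseq m s := Mseq_pos hm s
  have hdig : digit m (d * Mseq m s) s = d := by
    unfold digit
    rw [Nat.mul_div_cancel _ hMs, Nat.mod_eq_of_lt hd]
  have hzero : ∀ j, j ≠ s → rad m j x ^ digit m (d * Mseq m s) j = 1 := by
    intro j hjs
    rcases Nat.lt_or_ge j s with hj | hj
    · rw [digit_mul_zero hm hj, pow_zero]
    · have hj' : s + 1 ≤ j := by omega
      have hlt : d * Mseq m s < Mseq m (s+1) := by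
        show d * Mseq m s < m s * Mseq m s
        exact Nat.mul_lt_mul_of_pos_right hd hMs
      rw [digit_eq_zero_of_lt (lt_of_lt_of_le hlt (Mseq_le hm hj')), pow_zero]
  unfold vil
  rw [finprod_eq_single _ s hzero, hdig]

lemma rad_geom_zero {s : ℕ} {x : Gm m} (hx : x s ≠ 0) :
    ∑ d ∈ Finset.range (m s), rad m s x ^ d = 0 := by
  rw [geom_sum_eq (rad_ne_one hm hx), rad_pow_card hm, sub_self, zero_div]

omit hm in
lemma sum_range_add' (f : ℕ → ℂ) (a b : ℕ) :
    ∑ k ∈ Finset.range (a + b), f k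
      = ∑ k ∈ Finset.range a, f k + ∑ i ∈ Finset.range b, f (a + i) := by
  rw [Finset.range_eq_Ico, ← Finset.sum_Ico_consecutive f (Nat.zero_le a) (Nat.le_add_right a b)]
  congr 1
  all_goals simp [Finset.sum_Ico_eq_sum_range]

omit hm in
lemma sum_blocks (M : ℕ) (f : ℕ → ℂ) (q : ℕ) :
    ∑ k ∈ Finset.range (q * M), f k
      = ∑ a ∈ Finset.range q, ∑ b ∈ Finset.range M, f (a * M + b) := by
  induction q with
  | zero => simp
  | succ q ih => rw [Nat.succ_mul, sum_range_add' f, ih, Finset.sum_range_succ]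

lemma Dker_block {s : ℕ} {x : Gm m} (hx : x s ≠ 0) : Dker m (Mseq m (s+1)) x = 0 := by
  show ∑ k ∈ Finset.range (Mseq m (s+1)), vil m k x = 0
  rw [show Mseq m (s+1) = m s * Mseq m s from rfl, sum_blocks]
  have hcong : ∀ a ∈ Finset.range (m s),
      ∑ b ∈ Finset.range (Mseq m s), vil m (a * Mseq m s + b) x
        = rad m s x ^ a * ∑ b ∈ Finset.range (Mseq m s), vil m b x := by
    intro a ha
    calc ∑ b ∈ Finset.range (Mseq m s), vil m (a * Mseq m s + b) x
        = ∑ b ∈ Finset.range (Mseq m s), vil m (a * Mseq m s) x * vil m b x :=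
          Finset.sum_congr rfl fun b hb => vil_mul hm (Finset.mem_range.mp hb) x
      _ = vil m (a * Mseq m s) x * ∑ b ∈ Finset.range (Mseq m s), vil m b x := by
          rw [Finset.mul_sum]
      _ = rad m s x ^ a * ∑ b ∈ Finset.range (Mseq m s), vil m b x := by
          rw [vil_single hm (Finset.mem_range.mp ha) x]
  rw [Finset.sum_congr rfl hcong, ← Finset.sum_mul, rad_geom_zero hm hx, zero_mul]

lemma sum_blocks_vil_zero {s : ℕ} {x : Gm m} (hx : x s ≠ 0) (q : ℕ) :
    ∑ k ∈ Finset.range (q * Mseq m (s+1)), vil m k x = 0 := by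
  rw [sum_blocks]
  apply Finset.sum_eq_zero
  intro a _
  calc ∑ b ∈ Finset.range (Mseq m (s+1)), vil m (a * Mseq m (s+1) + b) x
      = ∑ b ∈ Finset.range (Mseq m (s+1)), vil m (a * Mseq m (s+1)) x * vil m b x :=
        Finset.sum_congr rfl fun b hb => vil_mul hm (Finset.mem_range.mp hb) x
    _ = vil m (a * Mseq m (s+1)) x * Dker m (Mseq m (s+1)) x := by
        rw [← Finset.mul_sum]; rfl
    _ = 0 := by rw [Dker_block hm hx, mul_zero]

lemma Dker_abs_le {s : ℕ} (n : ℕ) {x : Gm m} (hx : x s ≠ 0) :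
    ‖Dker m n x‖ ≤ (Mseq m (s+1) : ℝ) := by
  set M := Mseq m (s+1) with hM
  have hMpos : 0 < M := Mseq_pos hm (s+1)
  obtain ⟨q, r, hqr, hrlt⟩ : ∃ q r, n = q * M + r ∧ r < M := by
    refine ⟨n / M, n % M, ?_, Nat.mod_lt _ hMpos⟩
    have := Nat.div_add_mod n M
    rw [mul_comm]
    omega
  subst hqr
  show ‖∑ k ∈ Finset.range (q * M + r), vil m k x‖ ≤ (M : ℝ)
  rw [sum_range_add', sum_blocks_vil_zero hm hx q, zero_add]
  have h1 : ‖∑ i ∈ Finset.range r, vil m (q * M + i) x‖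
      ≤ ∑ i ∈ Finset.range r, ‖vil m (q * M + i) x‖ := by
    have := norm_sum_le (Finset.range r) (fun i => vil m (q * M + i) x)
    simpa using this
  refine h1.trans ?_
  calc ∑ i ∈ Finset.range r, ‖vil m (q * M + i) x‖
      = ∑ i ∈ Finset.range r, (1:ℝ) :=
        Finset.sum_congr rfl fun i _ => vil_abs hm _ x
    _ = (r : ℝ) := by simp
    _ ≤ (M : ℝ) := by exact_mod_cast hrlt.le

end helpers

/-- The defining property of the normalized Haar measure on the Vilenkin group:
every cylinder set `I_n(x)` has measure `1 / M_n`. -/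
def IsVilenkinHaar (m : ℕ → ℕ) (μ : Measure (Gm m)) : Prop :=
  ∀ (n : ℕ) (x : Gm m), μ {y : Gm m | ∀ j < n, y j = x j} = (Mseq m n : ENNReal)⁻¹

noncomputable def vilCoeff (m : ℕ → ℕ) (μ : Measure (Gm m)) (f : Gm m → ℂ) (j : ℕ) : ℂ :=
  ∫ t, f t * (starRingEnd ℂ) (vil m j t) ∂μ

noncomputable def Svil (m : ℕ → ℕ) (μ : Measure (Gm m)) (f : Gm m → ℂ) (n : ℕ) (x : Gm m) : ℂ :=
  ∑ j ∈ Finset.range n, vilCoeff m μ f j * vil m j x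

/-- For `x ∈ I_s \ I_{s+1}` with `0 ≤ s ≤ N - 1`,
`∫_{I_N} |D_n (x - t)| dμ(t) ≤ c M_s / M_N`, with `c` depending only on `sup m_k`. -/
theorem stmt_14 (mstar : ℕ) :
    ∃ c : ℝ, 0 < c ∧
      ∀ (m : ℕ → ℕ), (∀ k, 2 ≤ m k) → (∀ k, m k ≤ mstar) →
        ∀ (μ : Measure (Gm m)), IsProbabilityMeasure μ → IsVilenkinHaar m μ →
          ∀ (n N s : ℕ) (x : Gm m), s < N → (∀ j < s, x j = 0) → x s ≠ 0 →
            ∫ t in {t : Gm m | ∀ j < N, t j = 0},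
                ‖Dker m n (x - t)‖ ∂μ
              ≤ c * (Mseq m s : ℝ) / (Mseq m N : ℝ) := by
  refine ⟨(mstar : ℝ) + 1, by positivity, ?_⟩
  intro m hm hmstar μ hprob hHaar n N s x hsN hxlow hxs
  set S := {t : Gm m | ∀ j < N, t j = 0} with hS
  -- measurability
  have hZ : ∀ (kk : ℕ) (g : ZMod (m kk) → ℂ), Measurable g := fun kk g => measurable_from_top
  have hZ' : ∀ (kk : ℕ) (g : ZMod (m kk) → ZMod (m kk)), Measurable g :=
    fun kk g => measurable_from_top
  have hmeas_rad : ∀ j, Measurable fun y : Gm m => rad m j y := by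
    intro j
    have heq : (fun y : Gm m => rad m j y)
        = (fun z : ZMod (m j) => Complex.exp (2 * Real.pi * Complex.I * ((z.val : ℕ) : ℂ) / ((m j : ℕ) : ℂ)))
          ∘ (fun y : Gm m => y j) := rfl
    rw [heq]
    exact (hZ j _).comp (measurable_pi_apply j)
  have hmeas_vil : ∀ k, Measurable (vil m k) := by
    intro k
    have : vil m k = fun y => ∏ j ∈ Finset.range k, rad m j y ^ digit m k j :=
      funext fun y => vil_eq_prod hm k y
    rw [this]
    exact Finset.measurable_prod _ fun j _ => (hmeas_rad j).pow_const _
  have hsub : Measurable fun t : Gm m => x - t := by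
    apply measurable_pi_iff.mpr
    intro j
    have : (fun t : Gm m => (x - t) j) = (fun z : ZMod (m j) => x j - z) ∘ fun t : Gm m => t j :=
      funext fun t => by simp [Pi.sub_apply]
    rw [this]
    exact (hZ' j _).comp (measurable_pi_apply j)
  have hmeas_D : Measurable fun t : Gm m => Dker m n (x - t) := by
    have hD : Measurable (Dker m n) := by
      have : Dker m n = fun y => ∑ k ∈ Finset.range n, vil m k y := rfl
      rw [this]
      exact Finset.measurable_sum _ fun k _ => hmeas_vil k
    exact hD.comp hsub
  have hmeas_f : Measurable fun t : Gm m => ‖Dker m n (x - t)‖ :=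
    continuous_norm.measurable.comp hmeas_D
  -- measure of S
  have hμS : μ S = (Mseq m N : ENNReal)⁻¹ := by
    have h := hHaar N 0
    simpa using h
  have hμSfin : μ S < ⊤ := measure_lt_top μ S
  -- pointwise bound
  set C : ℝ := (Mseq m (s+1) : ℝ) with hC
  have hbound : ∀ t ∈ S, ‖‖Dker m n (x - t)‖‖ ≤ C := by
    intro t ht
    rw [Real.norm_eq_abs, _root_.abs_of_nonneg (norm_nonneg _)]
    apply Dker_abs_le hm
    have hts : t s = 0 := ht s hsN
    show (x - t) s ≠ 0
    rw [Pi.sub_apply, hts, sub_zero]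
    exact hxs
  have key := norm_setIntegral_le_of_norm_le_const (μ := μ) (s := S) hμSfin hbound
  have hstep : ∫ t in S, ‖Dker m n (x - t)‖ ∂μ ≤ C * (μ S).toReal := by
    refine le_trans ?_ key
    exact le_abs_self _
  refine hstep.trans ?_
  have htoReal : (μ S).toReal = ((Mseq m N : ℝ))⁻¹ := by
    rw [hμS, ENNReal.toReal_inv]
    simp
  rw [htoReal]
  have hMNpos : (0:ℝ) < (Mseq m N : ℝ) := by exact_mod_cast Mseq_pos hm N
  have hMspos : (0:ℝ) ≤ (Mseq m s : ℝ) := by positivity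
  have hCle : C ≤ ((mstar : ℝ) + 1) * (Mseq m s : ℝ) := by
    have h1 : (Mseq m (s+1) : ℝ) = (m s : ℝ) * (Mseq m s : ℝ) := by
      rw [show Mseq m (s+1) = m s * Mseq m s from rfl]
      push_cast
      ring
    rw [hC, h1]
    have hms : (m s : ℝ) ≤ (mstar : ℝ) + 1 := by
      have := hmstar s
      have : (m s : ℝ) ≤ (mstar : ℝ) := by exact_mod_cast this
      linarith
    exact mul_le_mul_of_nonneg_right hms hMspos
  calc C * ((Mseq m N : ℝ))⁻¹ ≤ ((mstar : ℝ) + 1) * (Mseq m s : ℝ) * ((Mseq m N : ℝ))⁻¹ :=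
        mul_le_mul_of_nonneg_right hCle (by positivity)
    _ = ((mstar : ℝ) + 1) * (Mseq m s : ℝ) / (Mseq m N : ℝ) := by
        rw [div_eq_mul_inv]
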